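/- Let X be a T1 regular space. If the hyperspace F_2(X) of nonempty subsets of X with at most two points, equipped with the Vietoris topology, is perfect (every closed subset is a G_δ-set), then X has a G_δ-diagonal. -/

import Mathlib

open Set TopologicalSpace

universe u v

/-- The Fell topology on the collection of all subsets of `X`, generated by the subbase
consisting of the sets `U⁻ = {H | H ∩ U ≠ ∅}` for `U` open and
`(Kᶜ)⁺ = {H | H ⊆ Kᶜ}` for `K` compact. -/
def fellTopology (X : Type u) [TopologicalSpace X] : TopologicalSpace (Set X) :=
  TopologicalSpace.generateFrom
    ({S | ∃ U : Set X, IsOpen U ∧ S = {H : Set X | (H ∩ U).Nonempty}} ∪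
     {S | ∃ K : Set X, IsCompact K ∧ S = {H : Set X | H ⊆ Kᶜ}})

/-- The Vietoris topology on the collection of all subsets of `X`, generated by the subbase
consisting of the sets `U⁺ = {H | H ⊆ U}` and `U⁻ = {H | H ∩ U ≠ ∅}` for `U` open. -/
def vietorisTopology (X : Type u) [TopologicalSpace X] : TopologicalSpace (Set X) :=
  TopologicalSpace.generateFrom
    ({S | ∃ U : Set X, IsOpen U ∧ S = {H : Set X | H ⊆ U}} ∪
     {S | ∃ U : Set X, IsOpen U ∧ S = {H : Set X | (H ∩ U).Nonempty}})

/-- A collection `S` of subsets of `X`, viewed as a hyperspace with the Fell topology. -/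
def FellHyper (X : Type u) [TopologicalSpace X] (S : Set (Set X)) : Type u :=
  {A : Set X // A ∈ S}

/-- A collection `S` of subsets of `X`, viewed as a hyperspace with the Vietoris topology. -/
def VietorisHyper (X : Type u) [TopologicalSpace X] (S : Set (Set X)) : Type u :=
  {A : Set X // A ∈ S}

instance FellHyper.instTopologicalSpace (X : Type u) [TopologicalSpace X] (S : Set (Set X)) :
    TopologicalSpace (FellHyper X S) :=
  TopologicalSpace.induced (Subtype.val : {A : Set X // A ∈ S} → Set X) (fellTopology X)

instance VietorisHyper.instTopologicalSpace (X : Type u) [TopologicalSpace X] (S : Set (Set X)) :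
    TopologicalSpace (VietorisHyper X S) :=
  TopologicalSpace.induced (Subtype.val : {A : Set X // A ∈ S} → Set X) (vietorisTopology X)

/-- The underlying subset of `X` of a point of a Fell hyperspace. -/
def FellHyper.carrier {X : Type u} [TopologicalSpace X] {S : Set (Set X)}
    (A : FellHyper X S) : Set X :=
  Subtype.val A

/-- The underlying subset of `X` of a point of a Vietoris hyperspace. -/
def VietorisHyper.carrier {X : Type u} [TopologicalSpace X] {S : Set (Set X)}
    (A : VietorisHyper X S) : Set X :=
  Subtype.val A

/-- `CL(X)`: the nonempty closed subsets of `X`. -/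
def CL (X : Type u) [TopologicalSpace X] : Set (Set X) := {A | A.Nonempty ∧ IsClosed A}

/-- `𝒦(X)`: the nonempty compact subsets of `X`. -/
def Kcal (X : Type u) [TopologicalSpace X] : Set (Set X) := {A | A.Nonempty ∧ IsCompact A}

/-- `ℱ(X)`: the nonempty finite subsets of `X`. -/
def Fcal (X : Type u) : Set (Set X) := {A | A.Nonempty ∧ A.Finite}

/-- `ℱₙ(X)`: the nonempty subsets of `X` with at most `n` points. -/
def Fn (X : Type u) (n : ℕ) : Set (Set X) := {A | A.Nonempty ∧ A.encard ≤ n}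

/-- A space is a `D₁`-space if every nonempty closed subset has a countable
neighborhood base. -/
def IsD1Space (Y : Type v) [TopologicalSpace Y] : Prop :=
  ∀ F : Set Y, F.Nonempty → IsClosed F →
    ∃ B : ℕ → Set Y, (∀ n, IsOpen (B n) ∧ F ⊆ B n) ∧
      ∀ V : Set Y, IsOpen V → F ⊆ V → ∃ n, B n ⊆ V

/-- A space is a `D₀`-space if every nonempty compact subset has a countable
neighborhood base. -/
def IsD0Space (Y : Type v) [TopologicalSpace Y] : Prop :=
  ∀ F : Set Y, F.Nonempty → IsCompact F →
    ∃ B : ℕ → Set Y, (∀ n, IsOpen (B n) ∧ F ⊆ B n) ∧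
      ∀ V : Set Y, IsOpen V → F ⊆ V → ∃ n, B n ⊆ V

/-- A space has a `G_δ`-diagonal if the diagonal is a `G_δ`-set in `X × X`. -/
def HasGdeltaDiagonal (X : Type u) [TopologicalSpace X] : Prop :=
  ∃ U : ℕ → Set (X × X), (∀ n, IsOpen (U n)) ∧ (⋂ n, U n) = {p : X × X | p.1 = p.2}

/-- A space is perfect if every closed subset is a `G_δ`-set. -/
def IsPerfectSpace (Y : Type v) [TopologicalSpace Y] : Prop :=
  ∀ F : Set Y, IsClosed F → ∃ U : ℕ → Set Y, (∀ n, IsOpen (U n)) ∧ F = ⋂ n, U n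

/-- A space has the compact-`G_δ` property if every compact subset is a `G_δ`-set. -/
def CompactGDeltaProperty (Y : Type v) [TopologicalSpace Y] : Prop :=
  ∀ K : Set Y, IsCompact K → ∃ U : ℕ → Set Y, (∀ n, IsOpen (U n)) ∧ K = ⋂ n, U n

/-- `γ`-space. -/
def IsGammaSpace (Y : Type v) [TopologicalSpace Y] : Prop :=
  ∃ g : ℕ → Y → Set Y,
    (∀ n y, IsOpen (g n y) ∧ y ∈ g n y) ∧
    (∀ y, ∀ V : Set Y, IsOpen V → y ∈ V → ∃ n, g n y ⊆ V) ∧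
    (∀ n y, ∃ m, ∀ z ∈ g m y, g m z ⊆ g n y)

/-- A space has a `G_δ*`-diagonal if there is a sequence `𝒰 n` of open covers such that
`{x} = ⋂ n, closure (st(x, 𝒰 n))` for every `x`. -/
def HasGdeltaStarDiagonal (X : Type u) [TopologicalSpace X] : Prop :=
  ∃ 𝒰 : ℕ → Set (Set X),
    (∀ n, ∀ U ∈ 𝒰 n, IsOpen U) ∧ (∀ n, ⋃₀ 𝒰 n = univ) ∧
    ∀ x : X, (⋂ n, closure (⋃₀ {U ∈ 𝒰 n | x ∈ U})) = {x}

/-- If `ℱ₂(X)` with the Vietoris topology is perfect, then `X` has a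
`G_δ`-diagonal. -/
theorem statement3 (X : Type u) [TopologicalSpace X] [T1Space X] [RegularSpace X]
    (h : IsPerfectSpace (VietorisHyper X (Fn X 2))) :
    HasGdeltaDiagonal X := by
  -- the pairing map
  have hmem : ∀ p : X × X, ({p.1, p.2} : Set X) ∈ Fn X 2 := by
    intro p
    refine ⟨⟨p.1, by simp⟩, ?_⟩
    calc ({p.1, p.2} : Set X).encard ≤ ({p.2} : Set X).encard + 1 :=
          Set.encard_insert_le _ _
      _ ≤ 2 := by simp [Set.encard_singleton]; rfl
  set q : X × X → VietorisHyper X (Fn X 2) := fun p => ⟨{p.1, p.2}, hmem p⟩ with hq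
  -- continuity of q
  have hqc : Continuous q := by
    rw [continuous_induced_rng]
    have : (Subtype.val ∘ q) = fun p : X × X => ({p.1, p.2} : Set X) := rfl
    rw [show ((fun x => x.1) ∘ q) = Subtype.val ∘ q from rfl, this]
    apply continuous_generateFrom_iff.mpr
    rintro s (⟨U, hU, rfl⟩ | ⟨U, hU, rfl⟩)
    · have : (fun p : X × X => ({p.1, p.2} : Set X)) ⁻¹' {H | H ⊆ U}
          = {p : X × X | p.1 ∈ U ∧ p.2 ∈ U} := by
        ext p; simp [Set.insert_subset_iff]
      rw [this]
      exact (hU.preimage continuous_fst).inter (hU.preimage continuous_snd)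
    · have : (fun p : X × X => ({p.1, p.2} : Set X)) ⁻¹' {H | (H ∩ U).Nonempty}
          = {p : X × X | p.1 ∈ U} ∪ {p : X × X | p.2 ∈ U} := by
        ext p
        simp only [Set.mem_preimage, Set.mem_setOf_eq, Set.mem_union,
          Set.inter_nonempty]
        constructor
        · rintro ⟨z, hz, hzU⟩
          rcases hz with rfl | rfl
          · exact Or.inl hzU
          · exact Or.inr hzU
        · rintro (h1 | h2)
          · exact ⟨p.1, by simp, h1⟩
          · exact ⟨p.2, by simp, h2⟩
      rw [this]
      exact (hU.preimage continuous_fst).union (hU.preimage continuous_snd)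
  -- the set of singletons is closed in the hyperspace
  haveI : T2Space X := by
    haveI : T3Space X := ⟨⟩
    infer_instance
  set C : Set (VietorisHyper X (Fn X 2)) := {A | ∃ x : X, A.carrier = {x}} with hC
  have hCclosed : IsClosed C := by
    rw [← isOpen_compl_iff]
    rw [isOpen_iff_forall_mem_open]
    intro A hA
    -- A has two distinct points
    obtain ⟨x, hx⟩ := A.2.1
    have : ∃ y ∈ A.1, y ≠ x := by
      by_contra hcon
      push_neg at hcon
      exact hA ⟨x, Set.eq_singleton_iff_unique_mem.mpr ⟨hx, hcon⟩⟩
    obtain ⟨y, hy, hyx⟩ := this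
    obtain ⟨U, V, hUo, hVo, hxU, hyV, hUV⟩ := t2_separation hyx.symm
    refine ⟨Subtype.val ⁻¹' ({H : Set X | (H ∩ U).Nonempty} ∩ {H | (H ∩ V).Nonempty}),
      ?_, ?_, ⟨x, hx, hxU⟩, ⟨y, hy, hyV⟩⟩
    · rintro B ⟨⟨u, huB, huU⟩, ⟨v, hvB, hvV⟩⟩ ⟨z, hz⟩
      have huz : u ∈ ({z} : Set X) := hz ▸ huB
      have hvz : v ∈ ({z} : Set X) := hz ▸ hvB
      simp only [Set.mem_singleton_iff] at huz hvz
      subst huz; subst hvz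
      exact Set.disjoint_left.mp hUV huU hvV
    · letI tV : TopologicalSpace (Set X) := vietorisTopology X
      have hval : Continuous (Subtype.val : VietorisHyper X (Fn X 2) → Set X) :=
        continuous_induced_dom
      apply IsOpen.preimage hval
      exact IsOpen.inter
        (TopologicalSpace.isOpen_generateFrom_of_mem (Or.inr ⟨U, hUo, rfl⟩))
        (TopologicalSpace.isOpen_generateFrom_of_mem (Or.inr ⟨V, hVo, rfl⟩))
  -- apply perfectness
  obtain ⟨G, hGopen, hGeq⟩ := h C hCclosed
  refine ⟨fun n => q ⁻¹' G n, fun n => (hGopen n).preimage hqc, ?_⟩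
  have hdiag : q ⁻¹' C = {p : X × X | p.1 = p.2} := by
    ext p
    simp only [Set.mem_preimage, Set.mem_setOf_eq]
    constructor
    · rintro ⟨z, hz⟩
      have h1 : p.1 ∈ ({z} : Set X) := hz ▸ (by simp : p.1 ∈ ({p.1, p.2} : Set X))
      have h2 : p.2 ∈ ({z} : Set X) := hz ▸ (by simp : p.2 ∈ ({p.1, p.2} : Set X))
      simp only [Set.mem_singleton_iff] at h1 h2
      rw [h1, h2]
    · intro hp
      refine ⟨p.1, ?_⟩
      show ({p.1, p.2} : Set X) = {p.1}
      rw [← hp]; simp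
  rw [← hdiag, hGeq, Set.preimage_iInter]
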